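/- Let S be a finite nonempty type, let P' : Matrix S S ℝ be row-stochastic, let 0 ≤ γ < 1, and let r', v', v : S → ℝ. If v' s = r' s + γ * ∑_{s'} P' s s' * v' s' for every s, then v' − v = (1 − γ • P')⁻¹.mulVec (fun s => r' s + γ * ∑_{s'} P' s s' * v s' − v s). (Value difference lemma in matrix form, used in both parts of the proof of the paper's Lemma 2.) -/
import Mathlib

/-- Value difference lemma in matrix form. -/
theorem stmt_10 {S : Type*} [Fintype S] [Nonempty S] [DecidableEq S]
    (P' : Matrix S S ℝ) (hP0 : ∀ s s', 0 ≤ P' s s') (hP1 : ∀ s, ∑ s', P' s s' = 1)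
    (γ : ℝ) (hγ0 : 0 ≤ γ) (hγ1 : γ < 1) (r' v' v : S → ℝ)
    (hv' : ∀ s, v' s = r' s + γ * ∑ s', P' s s' * v' s') :
    v' - v = (1 - γ • P')⁻¹.mulVec
      (fun s => r' s + γ * (∑ s', P' s s' * v s') - v s) := by
  set A : Matrix S S ℝ := 1 - γ • P' with hA
  have hdet : A.det ≠ 0 := by
    apply det_ne_zero_of_sum_row_lt_diag
    intro k
    have h1 : ∀ j ∈ Finset.univ.erase k, ‖A k j‖ = γ * P' k j := by
      intro j hj
      have hjk : j ≠ k := Finset.ne_of_mem_erase hj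
      simp only [hA, Matrix.sub_apply, Matrix.one_apply, Matrix.smul_apply, smul_eq_mul,
        if_neg (Ne.symm hjk), zero_sub, norm_neg, Real.norm_eq_abs, abs_mul,
        abs_of_nonneg hγ0, abs_of_nonneg (hP0 k j)]
    rw [Finset.sum_congr rfl h1]
    have hkk : A k k = 1 - γ * P' k k := by simp [hA, Matrix.one_apply]
    have hsum : ∑ j ∈ Finset.univ.erase k, γ * P' k j = γ * (1 - P' k k) := by
      rw [← Finset.mul_sum]
      congr 1
      have := hP1 k
      rw [← Finset.add_sum_erase _ _ (Finset.mem_univ k)] at this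
      linarith
    rw [hsum, hkk]
    have hPkk0 := hP0 k k
    have hPkk1 : P' k k ≤ 1 := by
      have := hP1 k
      have h2 : ∑ s' ∈ Finset.univ.erase k, P' k s' ≥ 0 :=
        Finset.sum_nonneg fun j _ => hP0 k j
      rw [← Finset.add_sum_erase _ _ (Finset.mem_univ k)] at this
      linarith
    have hpos : 0 < 1 - γ * P' k k := by nlinarith
    rw [Real.norm_eq_abs, abs_of_pos hpos]
    nlinarith
  have key : A.mulVec (v' - v) =
      (fun s => r' s + γ * (∑ s', P' s s' * v s') - v s) := by
    funext s
    have hv's := hv' s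
    simp only [Matrix.mulVec, dotProduct, Pi.sub_apply]
    have hpt : ∀ x, A s x * (v' x - v x) =
        (if s = x then v' x - v x else 0) - (γ * (P' s x * v' x) - γ * (P' s x * v x)) := by
      intro x
      simp only [hA, Matrix.sub_apply, Matrix.one_apply, Matrix.smul_apply, smul_eq_mul, ite_mul]
      split <;> ring
    rw [Finset.sum_congr rfl (fun x _ => hpt x), Finset.sum_sub_distrib,
      Finset.sum_sub_distrib, Finset.sum_ite_eq, if_pos (Finset.mem_univ s),
      ← Finset.mul_sum, ← Finset.mul_sum]
    linarith
  rw [← key, Matrix.mulVec_mulVec, Matrix.nonsing_inv_mul _ (isUnit_iff_ne_zero.mpr hdet),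
    Matrix.one_mulVec]
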